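/- For the parabola y = x² in the real plane with blue focus F_b = (0, 1/4) and blue directrix l_b: y = −1/4, the red focus F_r and red directrix l_r (a point F and line l not through F with Q_r(X,F) = Q_r(X,l) for all X on the parabola) exist, and F_b lies on l_r while F_r lies on l_b, and l_b and l_r are green-perpendicular. -/
import Mathlib


/-- Red quadrance between two points of the real plane. -/
def Qr (X Y : ℝ × ℝ) : ℝ :=
  (Y.1 - X.1) ^ 2 - (Y.2 - X.2) ^ 2

/-- Red dot product of two vectors. -/
def redDot (u v : ℝ × ℝ) : ℝ :=
  u.1 * v.1 - u.2 * v.2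

/-- Green dot product of two vectors. -/
def greenDot (u v : ℝ × ℝ) : ℝ :=
  u.1 * v.2 + v.1 * u.2

/-- For the parabola `y = x²` (with blue focus `(0,1/4)` and blue directrix
`y = -1/4`) there is a red focus `Fr` and a red directrix `lr : a x + b y + c = 0`
not through `Fr`, so that every point `X` of the parabola has its red quadrance
to `Fr` equal to its red quadrance to the foot of the red altitude from `X` to `lr`;
moreover the blue focus lies on `lr`, `Fr` lies on the blue directrix, and the
blue and red directrices are green-perpendicular. -/
theorem parabola_red_focus_directrix :
    ∃ (Fr : ℝ × ℝ) (a b c : ℝ),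
      (a, b) ≠ ((0 : ℝ), (0 : ℝ)) ∧
      a * Fr.1 + b * Fr.2 + c ≠ 0 ∧
      (∀ x : ℝ, ∀ Foot : ℝ × ℝ,
        a * Foot.1 + b * Foot.2 + c = 0 →
        redDot (Foot.1 - x, Foot.2 - x ^ 2) (-b, a) = 0 →
        Qr (x, x ^ 2) Fr = Qr (x, x ^ 2) Foot) ∧
      a * 0 + b * (1 / 4 : ℝ) + c = 0 ∧
      Fr.2 = -(1 / 4 : ℝ) ∧
      greenDot (1, 0) (-b, a) = 0 := by
  refine ⟨(0, -(1/4)), 0, 1, -(1/4), by simp, by norm_num, ?_, by norm_num, rfl, by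
    simp [greenDot]⟩
  intro x Foot hline halt
  have h1 : Foot.2 = 1/4 := by linarith [hline]
  have h2 : Foot.1 = x := by
    simp [redDot] at halt
    linarith
  simp only [Qr, h1, h2]
  ring
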